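/- Let S = S(n₁, n₂, …, n_l) be a starlike tree with center c, let D be a dominating set of S, let P_{n_i} be the i-th branch of S, and let P̃_{n_i} be the augmented branch, i.e., the subtree of S induced by {c} ∪ V(P_{n_i}). If n_i ≡ 1 (mod 3), then |D ∩ V(P_{n_i})| ≥ ⌈n_i/3⌉ − 1 and |D ∩ V(P̃_{n_i})| ≥ ⌈n_i/3⌉. -/

import Mathlib

open SimpleGraph Finset

/-- `D` is a dominating set of `G`: every vertex is in `D` or adjacent to a vertex of `D`. -/
def SimpleGraph.IsDominatingSet {V : Type*} (G : SimpleGraph V) (D : Set V) : Prop :=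
  ∀ v : V, v ∈ D ∨ ∃ u ∈ D, G.Adj u v

/-- The domination number of a finite graph. -/
noncomputable def SimpleGraph.dominationNumber {V : Type*} [Fintype V]
    (G : SimpleGraph V) : ℕ :=
  sInf {k | ∃ D : Finset V, D.card = k ∧ G.IsDominatingSet ↑D}

/-- The bondage number of a finite graph: the least size of a set of edges whose removal
increases the domination number. -/
noncomputable def SimpleGraph.bondageNumber {V : Type*} [Fintype V]
    (G : SimpleGraph V) : ℕ :=
  sInf {k | ∃ Z : Finset (Sym2 V), Z.card = k ∧ (↑Z : Set (Sym2 V)) ⊆ G.edgeSet ∧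
    G.dominationNumber < (G.deleteEdges ↑Z).dominationNumber}

/-- The strong product of two simple graphs. -/
def SimpleGraph.strongProd {V W : Type*} (G : SimpleGraph V) (H : SimpleGraph W) :
    SimpleGraph (V × W) :=
  SimpleGraph.fromRel (fun a b =>
    (a.1 = b.1 ∧ H.Adj a.2 b.2) ∨ (G.Adj a.1 b.1 ∧ a.2 = b.2) ∨
      (G.Adj a.1 b.1 ∧ H.Adj a.2 b.2))

infixl:70 " ⊠ " => SimpleGraph.strongProd

/-- The starlike tree `S(n₁, …, n_l)`: a center vertex `none` together with `l` disjoint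
paths (the branches), where the `j`-th vertex of the `i`-th branch is `some ⟨i, j⟩` and
the first vertex `some ⟨i, 0⟩` of each branch is adjacent to the center. -/
def starlikeTree (l : ℕ) (nb : Fin l → ℕ) :
    SimpleGraph (Option ((i : Fin l) × Fin (nb i))) :=
  SimpleGraph.fromRel (fun a b =>
    (∃ (i : Fin l) (j : Fin (nb i)), a = none ∧ b = some ⟨i, j⟩ ∧ (j : ℕ) = 0) ∨
    (∃ (i : Fin l) (j k : Fin (nb i)),
      a = some ⟨i, j⟩ ∧ b = some ⟨i, k⟩ ∧ (j : ℕ) + 1 = (k : ℕ)))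

/-- **Lemma.** Let `D` be a dominating set of the starlike tree `S(n₁, …, n_l)`.
If `n_i ≡ 1 (mod 3)`, then `|D ∩ V(P_{n_i})| ≥ ⌈n_i/3⌉ - 1` and
`|D ∩ V(P̃_{n_i})| ≥ ⌈n_i/3⌉`, where `P_{n_i}` is the `i`-th branch and `P̃_{n_i}` is the
augmented branch (the branch together with the center). -/
theorem dominating_starlikeTree_branch_mod_one (l : ℕ) (nb : Fin l → ℕ)
    (hnb : ∀ i, 1 ≤ nb i)
    (D : Finset (Option ((i : Fin l) × Fin (nb i))))
    (hdom : (starlikeTree l nb).IsDominatingSet ↑D)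
    (i : Fin l) (hi : nb i % 3 = 1) :
    (nb i + 2) / 3 - 1 ≤
      (D.filter (fun x => ∃ j : Fin (nb i), x = some ⟨i, j⟩)).card ∧
    (nb i + 2) / 3 ≤
      (D.filter (fun x => x = none ∨ ∃ j : Fin (nb i), x = some ⟨i, j⟩)).card := by
  classical
  have spec : ∀ j : Fin (nb i), ∃ o : Option (Fin (nb i)),
      (o = none → (none : Option ((i : Fin l) × Fin (nb i))) ∈ D ∧ (j : ℕ) = 0) ∧
      (∀ k : Fin (nb i), o = some k →
        (some ⟨i, k⟩ : Option ((i : Fin l) × Fin (nb i))) ∈ D ∧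
        ((k : ℕ) = (j : ℕ) ∨ (k : ℕ) + 1 = (j : ℕ) ∨ (j : ℕ) + 1 = (k : ℕ))) := by
    intro j
    rcases hdom (some ⟨i, j⟩) with h | ⟨u, hu, hadj⟩
    · refine ⟨some j, by simp, fun k hk => ?_⟩
      simp only [Option.some.injEq] at hk
      subst hk
      exact ⟨h, Or.inl rfl⟩
    · rw [starlikeTree, SimpleGraph.fromRel_adj] at hadj
      obtain ⟨hne, hrel | hrel⟩ := hadj
      · rcases hrel with ⟨i', j', ha, hb, hj0⟩ | ⟨i', j', k', ha, hb, hjk⟩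
        · -- u = none, dominator is the center; then j = 0
          simp only [Option.some.injEq, Sigma.mk.inj_iff] at hb
          obtain ⟨rfl, hj⟩ := hb
          have hj' : j = j' := eq_of_heq hj
          subst hj'
          refine ⟨none, fun _ => ⟨ha ▸ hu, hj0⟩, by simp⟩
        · -- u = some ⟨i, j'⟩ with j' + 1 = j
          simp only [Option.some.injEq, Sigma.mk.inj_iff] at hb
          obtain ⟨rfl, hk⟩ := hb
          have hk' : j = k' := eq_of_heq hk
          subst hk'
          refine ⟨some j', fun h => by simp at h, fun k hk => ?_⟩
          simp only [Option.some.injEq] at hk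
          subst hk
          exact ⟨ha ▸ hu, Or.inr (Or.inl hjk)⟩
      · rcases hrel with ⟨i', j', ha, hb, hj0⟩ | ⟨i', j', k', ha, hb, hjk⟩
        · exact absurd ha (by simp)
        · -- some ⟨i,j⟩ = some ⟨i', j'⟩ and u = some ⟨i', k'⟩ with j + 1 = k'
          simp only [Option.some.injEq, Sigma.mk.inj_iff] at ha
          obtain ⟨rfl, hj⟩ := ha
          have hj' : j = j' := eq_of_heq hj
          subst hj'
          refine ⟨some k', fun h => by simp at h, fun k hk => ?_⟩
          simp only [Option.some.injEq] at hk
          subst hk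
          exact ⟨hb ▸ hu, Or.inr (Or.inr hjk)⟩
  choose g hg using spec
  set D1 := D.filter (fun x => ∃ j : Fin (nb i), x = some ⟨i, j⟩) with hD1
  set D2 := D.filter (fun x => x = none ∨ ∃ j : Fin (nb i), x = some ⟨i, j⟩) with hD2
  set A := univ.filter (fun j : Fin (nb i) => g j = none) with hAdef
  set B := univ.filter (fun j : Fin (nb i) => ¬ g j = none) with hBdef
  have hAB : A.card + B.card = nb i := by
    rw [hAdef, hBdef, Finset.card_filter_add_card_filter_not, card_univ,
      Fintype.card_fin]
  -- the fiber over `none` has at most one element (the first vertex), none if center ∉ D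
  have hA1 : A.card ≤ 1 := by
    refine Finset.card_le_one.mpr fun a ha b hb => ?_
    simp only [hAdef, mem_filter] at ha hb
    have ha0 := ((hg a).1 ha.2).2
    have hb0 := ((hg b).1 hb.2).2
    exact Fin.ext (ha0.trans hb0.symm)
  have hA0 : (none : Option ((i : Fin l) × Fin (nb i))) ∉ D → A.card = 0 := by
    intro hc
    rw [Finset.card_eq_zero]
    refine Finset.eq_empty_of_forall_notMem fun a ha => ?_
    simp only [hAdef, mem_filter] at ha
    exact hc ((hg a).1 ha.2).1
  -- each vertex in `D1` dominates at most 3 branch vertices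
  have hBcard : B.card ≤ 3 * D1.card := by
    have h1 : B.card ≤ 3 * (B.image g).card := by
      refine Finset.card_le_mul_card_image B 3 fun o ho => ?_
      obtain ⟨j0, hj0, hgj0⟩ := Finset.mem_image.mp ho
      simp only [hBdef, mem_filter] at hj0
      obtain ⟨k, hk⟩ := Option.ne_none_iff_exists'.mp (hgj0 ▸ hj0.2)
      subst hk
      refine le_trans (Finset.card_le_card_of_injOn
        (t := ({(k : ℕ), (k : ℕ) + 1, (k : ℕ) - 1} : Finset ℕ)) (fun j => (j : ℕ))
        (fun a ha => ?_) (fun a _ b _ h => Fin.ext h)) ?_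
      · simp only [Finset.mem_coe, mem_filter] at ha
        have := ((hg a).2 k ha.2).2
        simp only [Finset.mem_coe, Finset.mem_insert, Finset.mem_singleton]
        omega
      · exact le_trans (Finset.card_insert_le _ _)
          (by have := Finset.card_insert_le ((k : ℕ) + 1) ({(k : ℕ) - 1} : Finset ℕ); rw [Finset.card_singleton] at this; omega)
    have h2 : (B.image g).card ≤ D1.card := by
      refine Finset.card_le_card_of_injOn
        (Option.map (fun k : Fin (nb i) => (⟨i, k⟩ : (i : Fin l) × Fin (nb i))))
        (fun o ho => ?_) (fun a ha b hb h => ?_)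
      · obtain ⟨j0, hj0, hgj0⟩ := Finset.mem_image.mp ho
        simp only [hBdef, mem_filter] at hj0
        obtain ⟨k, hk⟩ := Option.ne_none_iff_exists'.mp (hgj0 ▸ hj0.2)
        subst hk
        have := ((hg j0).2 k hgj0).1
        simp only [hD1, Finset.mem_coe, mem_filter, Option.map_some]
        exact ⟨this, ⟨k, rfl⟩⟩
      · cases a with
        | none =>
          cases b with
          | none => rfl
          | some kb => simp at h
        | some ka =>
          cases b with
          | none => simp at h
          | some kb =>
            simp only [Option.map_some, Option.some.injEq, Sigma.mk.inj_iff,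
              heq_eq_eq, true_and] at h
            rw [h]
    omega
  have hD12 : D1 ⊆ D2 := by
    intro x hx
    simp only [hD1, hD2, mem_filter] at hx ⊢
    exact ⟨hx.1, Or.inr hx.2⟩
  have hcard12 : D1.card ≤ D2.card := Finset.card_le_card hD12
  by_cases hc : (none : Option ((i : Fin l) × Fin (nb i))) ∈ D
  · have hnone2 : (none : Option ((i : Fin l) × Fin (nb i))) ∈ D2 := by
      simp [hD2, hc]
    have hnone1 : (none : Option ((i : Fin l) × Fin (nb i))) ∉ D1 := by
      simp [hD1]
    have hins : D1.card + 1 ≤ D2.card := by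
      have : insert none D1 ⊆ D2 := Finset.insert_subset hnone2 hD12
      have := Finset.card_le_card this
      rwa [Finset.card_insert_of_notMem hnone1] at this
    omega
  · have := hA0 hc
    omega
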